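/- Let 2 ≤ d₁ ≤ d₂, k = d₂ − d₁, and 1 ≤ a ≤ k. Then in ℚ[x,y], the colon ideal (x^{d₁}, y^{d₂}) : (x+y)^a is generated by x^{d₁} and H = y^{k−a+1} Σ_{i=0}^{d₁−1} (-1)^i binom(d₁+a−2−i, a−1) x^{d₁−1−i} y^i. -/

import Mathlib

open MvPolynomial Finset


lemma step13 {R : Type*} [CommRing R] (x y : R) (n b : ℕ) :
    (x + y) * (∑ j ∈ range n, ((-1:R)^j * ((b+1+j).choose (b+1) : R)) * x^j * y^(n-1-j))
    = y * (∑ j ∈ range n, ((-1:R)^j * ((b+j).choose b : R)) * x^j * y^(n-1-j))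
      - ((-1:R)^n * ((b+n).choose (b+1) : R)) * x^n := by
  have hx : x * (∑ j ∈ range n, ((-1:R)^j * ((b+1+j).choose (b+1) : R)) * x^j * y^(n-1-j))
      = -(∑ j ∈ range (n+1), ((-1:R)^j * ((b+j).choose (b+1) : R)) * x^j * y^(n-j)) := by
    rw [Finset.sum_range_succ']
    simp only [pow_zero, Nat.add_zero, Nat.choose_succ_self, Nat.cast_zero, one_mul, mul_zero,
      zero_mul, add_zero, Finset.mul_sum, neg_add_rev]
    rw [← Finset.sum_neg_distrib]
    apply Finset.sum_congr rfl
    intro j hj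
    have hj' : j < n := Finset.mem_range.mp hj
    have h1 : n - (j+1) = n - 1 - j := by omega
    have h2 : b + (j+1) = b + 1 + j := by omega
    rw [h1, h2]
    ring
  have hyS : ∀ c : ℕ, y * (∑ j ∈ range n, ((-1:R)^j * ((c+j).choose c : R)) * x^j * y^(n-1-j))
      = (∑ j ∈ range (n+1), ((-1:R)^j * ((c+j).choose c : R)) * x^j * y^(n-j))
        - ((-1:R)^n * ((c+n).choose c : R)) * x^n := by
    intro c
    rw [Finset.sum_range_succ]
    have hnn : n - n = 0 := by omega
    rw [hnn, pow_zero, mul_one, add_sub_cancel_right, Finset.mul_sum]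
    apply Finset.sum_congr rfl
    intro j hj
    have hj' : j < n := Finset.mem_range.mp hj
    have h1 : n - j = (n - 1 - j) + 1 := by omega
    rw [h1, pow_succ]
    ring
  have hpas : ∀ j : ℕ, (((b+1+j).choose (b+1) : R)) = ((b+j).choose b : R) + ((b+j).choose (b+1) : R) := by
    intro j
    have : (b+1+j).choose (b+1) = (b+j).choose b + (b+j).choose (b+1) := by
      have h2 : b+1+j = (b+j)+1 := by omega
      rw [h2, Nat.choose_succ_succ]
    rw [this]; push_cast; ring
  have key : (∑ j ∈ range (n+1), ((-1:R)^j * ((b+1+j).choose (b+1) : R)) * x^j * y^(n-j))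
      - (∑ j ∈ range (n+1), ((-1:R)^j * ((b+j).choose (b+1) : R)) * x^j * y^(n-j))
      = (∑ j ∈ range (n+1), ((-1:R)^j * ((b+j).choose b : R)) * x^j * y^(n-j)) := by
    rw [← Finset.sum_sub_distrib]
    apply Finset.sum_congr rfl
    intro j _
    rw [hpas j]; ring
  have hy := hyS (b+1)
  have hyb := hyS b
  have hlast : (∑ j ∈ range (n+1), ((-1:R)^j * ((b+j).choose b : R)) * x^j * y^(n-j))
      = y * (∑ j ∈ range n, ((-1:R)^j * ((b+j).choose b : R)) * x^j * y^(n-1-j))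
        + ((-1:R)^n * ((b+n).choose b : R)) * x^n := by
    rw [hyb]; ring
  have hpasn : (((b+1+n).choose (b+1) : R)) = ((b+n).choose b : R) + ((b+n).choose (b+1) : R) := hpas n
  rw [add_mul, hx, hy]
  linear_combination key + hlast - ((-1:R)^n * x^n) * hpasn

lemma key13 {R : Type*} [CommRing R] (x y : R) (n : ℕ) (b : ℕ) :
    ∃ P : R, (x+y)^(b+1) * (∑ j ∈ range n, ((-1:R)^j * ((b+j).choose b : R)) * x^j * y^(n-1-j))
      = y^(b+n) + x^n * P := by
  induction b with
  | zero =>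
      refine ⟨-(-1:R)^n, ?_⟩
      have hg := geom_sum₂_mul (-x) y n
      have hs : (∑ i ∈ range n, (-x)^i * y^(n-1-i))
          = ∑ j ∈ range n, ((-1:R)^j * ((0+j).choose 0 : R)) * x^j * y^(n-1-j) := by
        apply Finset.sum_congr rfl
        intro j _
        rw [neg_pow, Nat.choose_zero_right]
        push_cast
        ring
      rw [hs] at hg
      have hneg : ((-x)^n : R) = (-1:R)^n * x^n := by rw [neg_pow]
      rw [hneg] at hg
      rw [pow_one, zero_add]
      linear_combination -hg
  | succ b ih =>
      obtain ⟨P, hP⟩ := ih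
      refine ⟨y * P - ((-1:R)^n * ((b+n).choose (b+1) : R)) * (x+y)^(b+1), ?_⟩
      have hstep := step13 x y n b
      calc (x+y)^(b+1+1) * (∑ j ∈ range n, ((-1:R)^j * ((b+1+j).choose (b+1) : R)) * x^j * y^(n-1-j))
          = (x+y)^(b+1) * ((x+y) * (∑ j ∈ range n, ((-1:R)^j * ((b+1+j).choose (b+1) : R)) * x^j * y^(n-1-j))) := by ring
        _ = (x+y)^(b+1) * (y * (∑ j ∈ range n, ((-1:R)^j * ((b+j).choose b : R)) * x^j * y^(n-1-j))
              - ((-1:R)^n * ((b+n).choose (b+1) : R)) * x^n) := by rw [hstep]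
        _ = y * ((x+y)^(b+1) * (∑ j ∈ range n, ((-1:R)^j * ((b+j).choose b : R)) * x^j * y^(n-1-j)))
              - ((-1:R)^n * ((b+n).choose (b+1) : R)) * (x+y)^(b+1) * x^n := by ring
        _ = y * (y^(b+n) + x^n * P) - ((-1:R)^n * ((b+n).choose (b+1) : R)) * (x+y)^(b+1) * x^n := by rw [hP]
        _ = y^(b+1+n) + x^n * (y * P - ((-1:R)^n * ((b+n).choose (b+1) : R)) * (x+y)^(b+1)) := by
              rw [show b+1+n = (b+n)+1 by omega]; ring

lemma primeX0 : Prime (X 0 : MvPolynomial (Fin 2) ℚ) := by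
  rw [← MulEquiv.prime_iff (MvPolynomial.finSuccEquiv ℚ 1).toRingEquiv.toMulEquiv]
  have h0 : (MvPolynomial.finSuccEquiv ℚ 1).toRingEquiv.toMulEquiv (X 0) = Polynomial.X := by
    show (MvPolynomial.finSuccEquiv ℚ 1) (X 0) = Polynomial.X
    simp [MvPolynomial.finSuccEquiv_X_zero]
  rw [h0]
  exact Polynomial.prime_X

lemma notdvdX01 : ¬ (X 0 : MvPolynomial (Fin 2) ℚ) ∣ X 1 := by
  rintro ⟨c, hc⟩
  have := congrArg (MvPolynomial.eval (fun i : Fin 2 => if i = 0 then (0:ℚ) else 1)) hc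
  simp at this



theorem stmt_13 (d₁ d₂ a k : ℕ) (hd₁ : 2 ≤ d₁) (h12 : d₁ ≤ d₂) (hk : k = d₂ - d₁)
    (ha : 1 ≤ a) (hak : a ≤ k) :
    let x : MvPolynomial (Fin 2) ℚ := X 0
    let y : MvPolynomial (Fin 2) ℚ := X 1
    let H : MvPolynomial (Fin 2) ℚ := y ^ (k - a + 1) * ∑ i ∈ range d₁,
      C ((-1 : ℚ) ^ i * (Nat.choose (d₁ + a - 2 - i) (a - 1))) * x ^ (d₁ - 1 - i) * y ^ i
    ∀ g : MvPolynomial (Fin 2) ℚ,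
      g * (x + y) ^ a ∈ Ideal.span {x ^ d₁, y ^ d₂} ↔ g ∈ Ideal.span {x ^ d₁, H} := by
  intro x y H g
  obtain ⟨b, rfl⟩ : ∃ b, a = b + 1 := ⟨a - 1, by omega⟩
  set N : MvPolynomial (Fin 2) ℚ :=
    ∑ j ∈ range d₁, ((-1 : MvPolynomial (Fin 2) ℚ)^j *
      (((b+j).choose b : ℕ) : MvPolynomial (Fin 2) ℚ)) * x^j * y^(d₁-1-j) with hN
  have hd2 : y ^ d₂ = y ^ (b + d₁) * y ^ (k - (b+1) + 1) := by
    rw [← pow_add]; congr 1; omega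
  have hsum : (∑ i ∈ range d₁,
        C ((-1 : ℚ) ^ i * (Nat.choose (d₁ + (b+1) - 2 - i) ((b+1) - 1))) * x ^ (d₁ - 1 - i) * y ^ i)
      = C ((-1:ℚ)^(d₁-1)) * N := by
    rw [hN, Finset.mul_sum,
      ← Finset.sum_range_reflect (fun i => C ((-1 : ℚ) ^ i *
        (Nat.choose (d₁ + (b+1) - 2 - i) ((b+1) - 1))) * x ^ (d₁ - 1 - i) * y ^ i) d₁]
    apply Finset.sum_congr rfl
    intro i hi
    have hi' : i < d₁ := Finset.mem_range.mp hi
    have h1 : d₁ - 1 - (d₁ - 1 - i) = i := by omega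
    have h2 : d₁ + (b+1) - 2 - (d₁ - 1 - i) = b + i := by omega
    have h3 : (b+1) - 1 = b := by omega
    rw [h1, h2, h3]
    have hsign : (C ((-1:ℚ)^(d₁-1)) : MvPolynomial (Fin 2) ℚ) * (-1)^i = (-1)^(d₁-1-i) := by
      rw [map_pow, map_neg, map_one, ← pow_add,
        show (d₁-1) + i = 2*i + (d₁-1-i) by omega, pow_add, pow_mul, neg_one_sq, one_pow, one_mul]
    rw [map_mul, map_pow, map_neg, map_one, map_natCast]
    linear_combination (-((((b+i).choose b : ℕ) : MvPolynomial (Fin 2) ℚ) * x^i * y^(d₁-1-i))) * hsign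
  have hH : H = C ((-1:ℚ)^(d₁-1)) * (y ^ (k - (b+1) + 1) * N) := by
    show y ^ (k - (b+1) + 1) * (∑ i ∈ range d₁,
      C ((-1 : ℚ) ^ i * (Nat.choose (d₁ + (b+1) - 2 - i) ((b+1) - 1))) * x ^ (d₁ - 1 - i) * y ^ i) = _
    rw [hsum]; ring
  obtain ⟨P, hP⟩ := key13 x y d₁ b
  rw [← hN] at hP
  have hε : (C ((-1:ℚ)^(d₁-1)) : MvPolynomial (Fin 2) ℚ) * C ((-1:ℚ)^(d₁-1)) = 1 := by
    rw [← map_mul, ← pow_add, show (d₁-1)+(d₁-1) = 2*(d₁-1) by omega, pow_mul, neg_one_sq,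
      one_pow, map_one]
  constructor
  · intro h
    rw [Ideal.mem_span_pair] at h ⊢
    obtain ⟨f, q, hfq⟩ := h
    have h2 : (g - q * (y ^ (k-(b+1)+1) * N)) * y^(b+d₁) = (f * N - g * P) * x^(d₁) := by
      rw [hd2] at hfq
      linear_combination (-g) * hP - N * hfq
    have hdvd : x^d₁ ∣ (g - q * (y ^ (k-(b+1)+1) * N)) * y^(b+d₁) :=
      ⟨f * N - g * P, by linear_combination h2⟩
    have hnd : ¬ x ∣ y^(b+d₁) := by
      intro hxy
      exact notdvdX01 (primeX0.dvd_of_dvd_pow hxy)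
    have hxd : x^d₁ ∣ (g - q * (y ^ (k-(b+1)+1) * N)) :=
      primeX0.pow_dvd_of_dvd_mul_right d₁ hnd hdvd
    obtain ⟨s, hs⟩ := hxd
    refine ⟨s, q * C ((-1:ℚ)^(d₁-1)), ?_⟩
    rw [hH]
    linear_combination (-1 : MvPolynomial (Fin 2) ℚ) * hs + (q * (y ^ (k-(b+1)+1) * N)) * hε
  · intro h
    rw [Ideal.mem_span_pair] at h ⊢
    obtain ⟨u, v, huv⟩ := h
    refine ⟨u * (x+y)^(b+1) + v * C ((-1:ℚ)^(d₁-1)) * (y ^ (k-(b+1)+1)) * P,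
      v * C ((-1:ℚ)^(d₁-1)), ?_⟩
    rw [hd2]
    linear_combination ((x+y)^(b+1)) * huv + (-(v * C ((-1:ℚ)^(d₁-1)) * y ^ (k-(b+1)+1))) * hP
      + (-(v * (x+y)^(b+1))) * hH
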